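/- For every n×n matrix A and every subset S of {1,...,n}, the principal minor satisfies D_S(A) = Σ_{partitions S_1⊔⋯⊔S_k = S} (-1)^{|S|-k} C_{S_1}(A)⋯C_{S_k}(A), where the sum is over all set-partitions of S into nonempty blocks. -/

import Mathlib

open scoped Classical

/-- The cycle-sum `C_S(A)`: sum over all cyclic orderings of `S` of the
corresponding cyclic products of entries of `A`. -/
noncomputable def cycleSum {n : ℕ} (A : Matrix (Fin n) (Fin n) ℂ) (S : Finset (Fin n)) : ℂ :=
  ∑ σ ∈ Finset.univ.filter
      (fun σ : Equiv.Perm (Fin n) =>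
        σ.IsCycleOn (S : Set (Fin n)) ∧ ∀ i ∉ S, σ i = i),
    ∏ i ∈ S, A i (σ i)

/-- The principal minor of `A` with row and column set `S`. -/
noncomputable def pminor {n : ℕ} (A : Matrix (Fin n) (Fin n) ℂ) (S : Finset (Fin n)) : ℂ :=
  (A.submatrix (fun i : S => (i : Fin n)) (fun i : S => (i : Fin n))).det

namespace Stmt8Aux

open Finset Equiv Equiv.Perm

variable {n : ℕ}

/-- The finset of permutations that are a cycle on `T` and fix everything outside `T`. -/
noncomputable def cycsOn (T : Finset (Fin n)) : Finset (Perm (Fin n)) :=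
  Finset.univ.filter
      (fun σ : Equiv.Perm (Fin n) =>
        σ.IsCycleOn (T : Set (Fin n)) ∧ ∀ i ∉ T, σ i = i)

lemma cycleSum_eq (A : Matrix (Fin n) (Fin n) ℂ) (T : Finset (Fin n)) :
    cycleSum A T = ∑ σ ∈ cycsOn T, ∏ i ∈ T, A i (σ i) := rfl

/-- The finset of permutations fixing everything outside `S`. -/
noncomputable def permsOn (S : Finset (Fin n)) : Finset (Perm (Fin n)) :=
  Finset.univ.filter fun σ : Perm (Fin n) => ∀ i ∉ S, σ i = i

lemma mem_permsOn {S : Finset (Fin n)} {σ : Perm (Fin n)} :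
    σ ∈ permsOn S ↔ ∀ i ∉ S, σ i = i := by simp [permsOn]

lemma mem_cycsOn {T : Finset (Fin n)} {σ : Perm (Fin n)} :
    σ ∈ cycsOn T ↔ σ.IsCycleOn (T : Set (Fin n)) ∧ ∀ i ∉ T, σ i = i := by simp [cycsOn]

lemma apply_mem_iff_of_fix {S : Finset (Fin n)} {σ : Perm (Fin n)}
    (hσ : ∀ i ∉ S, σ i = i) (x : Fin n) : x ∈ S ↔ σ x ∈ S := by
  constructor
  · intro hx
    by_contra h
    have h2 : σ (σ x) = σ x := hσ _ h
    have := σ.injective h2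
    rw [this] at h
    exact h hx
  · intro hx
    by_contra h
    rw [hσ x h] at hx
    exact h hx

lemma pow_agree {σ τ : Perm (Fin n)} {T : Finset (Fin n)}
    (hmem : ∀ x ∈ T, σ x ∈ T) (hag : ∀ x ∈ T, σ x = τ x) :
    ∀ (k : ℕ) (x : Fin n), x ∈ T → (σ ^ k) x = (τ ^ k) x ∧ (σ ^ k) x ∈ T := by
  intro k
  induction k with
  | zero => simp
  | succ k ih =>
    intro x hx
    have h1 := hmem x hx
    have h2 := ih (σ x) h1
    constructor
    · rw [pow_succ, mul_apply, pow_succ, mul_apply, ← hag x hx]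
      exact h2.1
    · rw [pow_succ, mul_apply]
      exact h2.2

lemma sameCycle_of_agree {σ τ : Perm (Fin n)} {T : Finset (Fin n)}
    (hmem : ∀ x ∈ T, σ x ∈ T) (hag : ∀ x ∈ T, σ x = τ x) {x y : Fin n}
    (hx : x ∈ T) (h : σ.SameCycle x y) : τ.SameCycle x y := by
  obtain ⟨k, -, hk⟩ := h.exists_pow_eq'
  exact ⟨(k : ℤ), by rw [zpow_natCast, ← (pow_agree hmem hag k x hx).1, hk]⟩

lemma mem_of_sameCycle {σ : Perm (Fin n)} {T : Finset (Fin n)}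
    (hmem : ∀ x ∈ T, σ x ∈ T) {x y : Fin n} (hx : x ∈ T) (h : σ.SameCycle x y) :
    y ∈ T := by
  obtain ⟨k, -, hk⟩ := h.exists_pow_eq'
  have := (pow_agree hmem (fun x _ => rfl) k x hx).2
  rwa [hk] at this

/-- The `σ.SameCycle` class of `i` inside `S`. -/
noncomputable def cls (σ : Perm (Fin n)) (S : Finset (Fin n)) (i : Fin n) : Finset (Fin n) :=
  S.filter (σ.SameCycle i)

lemma mem_cls {σ : Perm (Fin n)} {S : Finset (Fin n)} {i x : Fin n} :
    x ∈ cls σ S i ↔ x ∈ S ∧ σ.SameCycle i x := by simp [cls]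

lemma self_mem_cls {σ : Perm (Fin n)} {S : Finset (Fin n)} {i : Fin n} (hi : i ∈ S) :
    i ∈ cls σ S i := mem_cls.2 ⟨hi, SameCycle.rfl⟩

/-- The partition of `S` into `SameCycle`-classes of `σ`. -/
noncomputable def cyclePart (σ : Perm (Fin n)) (S : Finset (Fin n)) : Finpartition S where
  parts := S.image fun i => cls σ S i
  supIndep := by
    rw [Finset.supIndep_iff_pairwiseDisjoint]
    intro T hT U hU hne
    simp only [coe_image, Set.mem_image, mem_coe] at hT hU
    obtain ⟨i, hi, rfl⟩ := hT
    obtain ⟨j, hj, rfl⟩ := hU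
    simp only [Function.onFun, id_eq]
    rw [Finset.disjoint_left]
    intro a ha hb
    apply hne
    rw [mem_cls] at ha hb
    have key : ∀ y, σ.SameCycle i y ↔ σ.SameCycle j y := fun y =>
      ⟨fun h => hb.2.trans (ha.2.symm.trans h), fun h => ha.2.trans (hb.2.symm.trans h)⟩
    ext y
    simp only [mem_cls, key]
  sup_parts := by
    apply le_antisymm
    · apply Finset.sup_le
      intro T hT
      obtain ⟨i, hi, rfl⟩ := Finset.mem_image.1 hT
      exact Finset.filter_subset _ _
    · intro x hx
      have h1 : x ∈ cls σ S x := self_mem_cls hx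
      have h2 : cls σ S x ∈ S.image fun i => cls σ S i := Finset.mem_image_of_mem _ hx
      exact (Finset.le_sup (f := id) h2) h1
  bot_notMem := by
    intro h
    obtain ⟨i, hi, hbot⟩ := Finset.mem_image.1 h
    have : i ∈ cls σ S i := self_mem_cls hi
    rw [hbot] at this
    exact absurd this (Finset.notMem_empty i)

lemma cls_invariant {S : Finset (Fin n)} {σ : Perm (Fin n)}
    (hσ : ∀ i ∉ S, σ i = i) (i : Fin n) :
    ∀ x, x ∈ cls σ S i ↔ σ x ∈ cls σ S i := by
  intro x
  simp only [mem_cls]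
  constructor
  · rintro ⟨hxS, hc⟩
    exact ⟨(apply_mem_iff_of_fix hσ x).1 hxS, hc.trans ⟨1, by simp⟩⟩
  · rintro ⟨hxS, hc⟩
    by_cases hx : x ∈ S
    · refine ⟨hx, hc.trans ?_⟩
      exact ⟨-1, by simp⟩
    · rw [hσ x hx] at hxS
      exact absurd hxS hx

/-- Restriction of `σ` to `T` (as a permutation fixing the complement of `T`). -/
noncomputable def restr (σ : Perm (Fin n)) (T : Finset (Fin n)) : Perm (Fin n) :=
  if h : ∀ x, x ∈ T ↔ σ x ∈ T then ofSubtype (σ.subtypePerm (fun x => (h x).symm)) else 1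

lemma restr_apply_of_mem {σ : Perm (Fin n)} {T : Finset (Fin n)}
    (h : ∀ x, x ∈ T ↔ σ x ∈ T) {x : Fin n} (hx : x ∈ T) : restr σ T x = σ x := by
  rw [restr, dif_pos h]
  exact ofSubtype_apply_of_mem _ hx

lemma restr_apply_of_not_mem {σ : Perm (Fin n)} {T : Finset (Fin n)}
    (h : ∀ x, x ∈ T ↔ σ x ∈ T) {x : Fin n} (hx : x ∉ T) : restr σ T x = x := by
  rw [restr, dif_pos h]
  exact ofSubtype_apply_of_not_mem _ hx

lemma restr_mem_cycsOn {S : Finset (Fin n)} {σ : Perm (Fin n)}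
    (hσ : ∀ i ∉ S, σ i = i) {i : Fin n} (hi : i ∈ S) :
    restr σ (cls σ S i) ∈ cycsOn (cls σ S i) := by
  set T := cls σ S i with hT
  have hinv : ∀ x, x ∈ T ↔ σ x ∈ T := cls_invariant hσ i
  rw [mem_cycsOn]
  refine ⟨⟨⟨?_, ?_, ?_⟩, ?_⟩, ?_⟩
  · intro x hx
    have hx' : x ∈ T := hx
    have hgoal : restr σ T x ∈ T := by
      rw [restr_apply_of_mem hinv hx']
      exact (hinv x).1 hx'
    exact hgoal
  · exact (restr σ T).injective.injOn
  · intro y hy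
    simp only [mem_coe, Set.mem_image] at hy ⊢
    refine ⟨σ⁻¹ y, ?_, ?_⟩
    · have : σ (σ⁻¹ y) ∈ T := by simpa using hy
      exact mem_coe.2 ((hinv (σ⁻¹ y)).2 this)
    · have hmem : σ⁻¹ y ∈ T := by
        have : σ (σ⁻¹ y) ∈ T := by simpa using hy
        exact (hinv (σ⁻¹ y)).2 this
      rw [restr_apply_of_mem hinv hmem]
      simp
  · intro x hx y hy
    simp only [mem_coe] at hx hy
    have hcx : σ.SameCycle i x := (mem_cls.1 hx).2
    have hcy : σ.SameCycle i y := (mem_cls.1 hy).2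
    have hxy : σ.SameCycle x y := hcx.symm.trans hcy
    exact sameCycle_of_agree (fun x hx => (hinv x).1 hx)
      (fun x hx => (restr_apply_of_mem hinv hx).symm) hx hxy
  · intro x hx
    exact restr_apply_of_not_mem hinv hx

section Glue

variable {S : Finset (Fin n)}

lemma g_congr {P : Finpartition S} (g : ∀ T ∈ P.parts, Perm (Fin n))
    {T U : Finset (Fin n)} (hT : T ∈ P.parts) (hU : U ∈ P.parts) (h : T = U) :
    g T hT = g U hU := by subst h; rfl

lemma cycsOn_apply_mem {T : Finset (Fin n)} {τ : Perm (Fin n)} (hτ : τ ∈ cycsOn T)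
    (x : Fin n) : x ∈ T ↔ τ x ∈ T :=
  apply_mem_iff_of_fix (mem_cycsOn.1 hτ).2 x

/-- Glue a family of cycles on the parts of a partition into a single permutation. -/
noncomputable def glueFun (P : Finpartition S) (g : ∀ T ∈ P.parts, Perm (Fin n))
    (hg : ∀ T (hT : T ∈ P.parts), g T hT ∈ cycsOn T) : Perm (Fin n) where
  toFun x := if h : x ∈ S then g (P.part x) (P.part_mem.2 h) x else x
  invFun x := if h : x ∈ S then (g (P.part x) (P.part_mem.2 h))⁻¹ x else x
  left_inv := by
    intro x
    dsimp only
    by_cases h : x ∈ S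
    · rw [dif_pos h]
      set T := P.part x with hTdef
      have hT : T ∈ P.parts := P.part_mem.2 h
      have hxT : x ∈ T := P.mem_part h
      have hyT : g T hT x ∈ T := (cycsOn_apply_mem (hg T hT) x).1 hxT
      have hyS : g T hT x ∈ S := P.le hT hyT
      rw [dif_pos hyS]
      rw [g_congr g (P.part_mem.2 hyS) hT (P.part_eq_of_mem hT hyT)]
      exact (g T hT).symm_apply_apply x
    · rw [dif_neg h, dif_neg h]
  right_inv := by
    intro x
    dsimp only
    by_cases h : x ∈ S
    · rw [dif_pos h]
      set T := P.part x with hTdef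
      have hT : T ∈ P.parts := P.part_mem.2 h
      have hxT : x ∈ T := P.mem_part h
      have hzT : (g T hT)⁻¹ x ∈ T := by
        rw [cycsOn_apply_mem (hg T hT) ((g T hT)⁻¹ x)]
        simpa using hxT
      have hzS : (g T hT)⁻¹ x ∈ S := P.le hT hzT
      rw [dif_pos hzS]
      rw [g_congr g (P.part_mem.2 hzS) hT (P.part_eq_of_mem hT hzT)]
      exact (g T hT).apply_symm_apply x
    · rw [dif_neg h, dif_neg h]

lemma glueFun_apply_of_mem (P : Finpartition S) (g : ∀ T ∈ P.parts, Perm (Fin n))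
    (hg : ∀ T (hT : T ∈ P.parts), g T hT ∈ cycsOn T) {x : Fin n} (hx : x ∈ S) :
    glueFun P g hg x = g (P.part x) (P.part_mem.2 hx) x := dif_pos hx

lemma glueFun_apply_of_not_mem (P : Finpartition S) (g : ∀ T ∈ P.parts, Perm (Fin n))
    (hg : ∀ T (hT : T ∈ P.parts), g T hT ∈ cycsOn T) {x : Fin n} (hx : x ∉ S) :
    glueFun P g hg x = x := dif_neg hx

lemma glueFun_apply_of_mem_part (P : Finpartition S) (g : ∀ T ∈ P.parts, Perm (Fin n))
    (hg : ∀ T (hT : T ∈ P.parts), g T hT ∈ cycsOn T) {T : Finset (Fin n)}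
    (hT : T ∈ P.parts) {x : Fin n} (hx : x ∈ T) :
    glueFun P g hg x = g T hT x := by
  have hxS : x ∈ S := P.le hT hx
  rw [glueFun_apply_of_mem P g hg hxS]
  exact DFunLike.congr_fun (g_congr g (P.part_mem.2 hxS) hT (P.part_eq_of_mem hT hx)) x

lemma glueFun_mem_permsOn (P : Finpartition S) (g : ∀ T ∈ P.parts, Perm (Fin n))
    (hg : ∀ T (hT : T ∈ P.parts), g T hT ∈ cycsOn T) :
    glueFun P g hg ∈ permsOn S :=
  mem_permsOn.2 fun _ hx => glueFun_apply_of_not_mem P g hg hx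

end Glue


section NoncommProdLemmas

variable {ι : Type*}

lemma noncommProd_apply_fix (s : Finset ι) (f : ι → Perm (Fin n)) :
    ∀ (comm : (↑s : Set ι).Pairwise fun a b => Commute (f a) (f b)) (x : Fin n),
      (∀ i ∈ s, f i x = x) → s.noncommProd f comm x = x := by
  induction s using Finset.induction_on with
  | empty => intro comm x _; simp
  | @insert a s ha ih =>
    intro comm x hx
    rw [Finset.noncommProd_insert_of_notMem _ _ _ comm ha, mul_apply,
      ih _ x (fun i hi => hx i (Finset.mem_insert_of_mem hi)),
      hx a (Finset.mem_insert_self a s)]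

lemma noncommProd_apply_single (s : Finset ι) (f : ι → Perm (Fin n))
    (t : ι → Finset (Fin n)) :
    ∀ (comm : (↑s : Set ι).Pairwise fun a b => Commute (f a) (f b)),
      (∀ i ∈ s, ∀ x ∉ t i, f i x = x) →
      (∀ i ∈ s, ∀ x ∈ t i, f i x ∈ t i) →
      (∀ i ∈ s, ∀ j ∈ s, i ≠ j → Disjoint (t i) (t j)) →
      ∀ i₀ ∈ s, ∀ x ∈ t i₀, s.noncommProd f comm x = f i₀ x := by
  induction s using Finset.induction_on with
  | empty => intro _ _ _ _ i₀ h; exact absurd h (Finset.notMem_empty _)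
  | @insert a s ha ih =>
    intro comm hfix hmaps hdisj i₀ hi₀ x hx
    rw [Finset.noncommProd_insert_of_notMem _ _ _ comm ha, mul_apply]
    rcases Finset.mem_insert.1 hi₀ with rfl | hi₀'
    · have hrest : s.noncommProd f (comm.mono fun _ => Finset.mem_insert_of_mem) x = x := by
        apply noncommProd_apply_fix
        intro j hj
        apply hfix j (Finset.mem_insert_of_mem hj)
        intro hxj
        have hne : i₀ ≠ j := by rintro rfl; exact ha hj
        exact absurd hxj
          (Finset.disjoint_left.1
            (hdisj i₀ (Finset.mem_insert_self _ _) j (Finset.mem_insert_of_mem hj) hne) hx)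
      rw [hrest]
    · have hrest : s.noncommProd f (comm.mono fun _ => Finset.mem_insert_of_mem) x
          = f i₀ x := by
        apply ih _ (fun i hi => hfix i (Finset.mem_insert_of_mem hi))
          (fun i hi => hmaps i (Finset.mem_insert_of_mem hi))
          (fun i hi j hj hij => hdisj i (Finset.mem_insert_of_mem hi) j
            (Finset.mem_insert_of_mem hj) hij) i₀ hi₀' x hx
      rw [hrest]
      apply hfix a (Finset.mem_insert_self _ _)
      intro hcontra
      have hne : a ≠ i₀ := by rintro rfl; exact ha hi₀'
      have hmem : f i₀ x ∈ t i₀ := hmaps i₀ (Finset.mem_insert_of_mem hi₀') x hx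
      exact absurd hmem
        (Finset.disjoint_left.1
          (hdisj a (Finset.mem_insert_self _ _) i₀ (Finset.mem_insert_of_mem hi₀') hne) hcontra)

lemma sign_noncommProd (s : Finset ι) (f : ι → Perm (Fin n))
    (comm : (↑s : Set ι).Pairwise fun a b => Commute (f a) (f b)) :
    Equiv.Perm.sign (s.noncommProd f comm) = ∏ i ∈ s, Equiv.Perm.sign (f i) := by
  rw [Finset.map_noncommProd s f comm (Equiv.Perm.sign (α := Fin n))]
  exact Finset.noncommProd_eq_prod _ _

end NoncommProdLemmas


section Main

variable {S : Finset (Fin n)}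

lemma sign_of_mem_cycsOn {T : Finset (Fin n)} {τ : Perm (Fin n)}
    (h : τ ∈ cycsOn T) (hT : T.Nonempty) :
    Equiv.Perm.sign τ = (-1 : ℤˣ) ^ (T.card - 1) := by
  obtain ⟨hcyc, hfix⟩ := mem_cycsOn.1 h
  by_cases h1 : T.card = 1
  · obtain ⟨a, rfl⟩ := Finset.card_eq_one.1 h1
    have ha : τ a = a := by
      have h2 := hcyc
      rw [Finset.coe_singleton, Equiv.Perm.isCycleOn_singleton] at h2
      exact h2
    have hτ : τ = 1 := by
      apply Equiv.ext
      intro x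
      rw [Equiv.Perm.one_apply]
      by_cases hx : x = a
      · rw [hx]; exact ha
      · exact hfix x (by simp [hx])
    rw [hτ]
    simp [h1]
  · have hpos : 0 < T.card := Finset.card_pos.2 hT
    have hlt : 1 < T.card := lt_of_le_of_ne hpos (Ne.symm h1)
    have hnt : (↑T : Set (Fin n)).Nontrivial := Finset.one_lt_card_iff_nontrivial.1 hlt
    have hcycle : τ.IsCycle := by
      rw [Equiv.Perm.isCycle_iff_exists_isCycleOn]
      exact ⟨↑T, hnt, hcyc, fun x hx => by
        by_contra hxT
        exact hx (hfix x (by simpa using hxT))⟩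
    have hsupp : τ.support = T := by
      ext x
      rw [Equiv.Perm.mem_support]
      constructor
      · intro hx
        by_contra hxT
        exact hx (hfix x hxT)
      · intro hx
        exact hcyc.apply_ne hnt (Finset.mem_coe.2 hx)
    rw [hcycle.sign, hsupp]
    have hcard : T.card - 1 + 1 = T.card := Nat.succ_pred_eq_of_pos hpos
    conv_lhs => rw [← hcard]
    rw [pow_succ, mul_neg_one, neg_neg]

lemma glue_comm (P : Finpartition S) (g : ∀ T ∈ P.parts, Perm (Fin n))
    (hg : ∀ T (hT : T ∈ P.parts), g T hT ∈ cycsOn T) :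
    (↑P.parts.attach : Set { x // x ∈ P.parts }).Pairwise
      fun a b => Commute (g a.1 a.2) (g b.1 b.2) := by
  intro a _ b _ hab
  have hne : a.1 ≠ b.1 := fun h => hab (Subtype.ext h)
  apply Equiv.Perm.Disjoint.commute
  intro x
  by_cases hxa : x ∈ a.1
  · right
    apply (mem_cycsOn.1 (hg b.1 b.2)).2
    intro hxb
    exact hne (P.eq_of_mem_parts a.2 b.2 hxa hxb)
  · left
    exact (mem_cycsOn.1 (hg a.1 a.2)).2 x hxa

lemma parts_disjoint (P : Finpartition S) :
    ∀ a ∈ P.parts.attach, ∀ b ∈ P.parts.attach, a ≠ b →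
      Disjoint (a.1 : Finset (Fin n)) b.1 := by
  intro a _ b _ hab
  have hne : a.1 ≠ b.1 := fun h => hab (Subtype.ext h)
  rw [Finset.disjoint_left]
  intro x hxa hxb
  exact hne (P.eq_of_mem_parts a.2 b.2 hxa hxb)

lemma glueFun_eq_noncommProd (P : Finpartition S) (g : ∀ T ∈ P.parts, Perm (Fin n))
    (hg : ∀ T (hT : T ∈ P.parts), g T hT ∈ cycsOn T) :
    glueFun P g hg
      = P.parts.attach.noncommProd (fun T => g T.1 T.2) (glue_comm P g hg) := by
  apply Equiv.ext
  intro x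
  by_cases hx : x ∈ S
  · have hT : P.part x ∈ P.parts := P.part_mem.2 hx
    rw [glueFun_apply_of_mem P g hg hx]
    exact (noncommProd_apply_single P.parts.attach (fun T => g T.1 T.2) (fun T => T.1)
      (glue_comm P g hg)
      (fun T _ y hy => (mem_cycsOn.1 (hg T.1 T.2)).2 y hy)
      (fun T _ y hy => (cycsOn_apply_mem (hg T.1 T.2) y).1 hy)
      (parts_disjoint P)
      ⟨P.part x, hT⟩ (Finset.mem_attach _ _) x (P.mem_part hx)).symm
  · rw [glueFun_apply_of_not_mem P g hg hx]
    exact (noncommProd_apply_fix P.parts.attach (fun T => g T.1 T.2) (glue_comm P g hg) x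
      (fun T _ => (mem_cycsOn.1 (hg T.1 T.2)).2 x
        (fun hxT => hx (P.le T.2 hxT)))).symm

lemma sign_glueFun (P : Finpartition S) (g : ∀ T ∈ P.parts, Perm (Fin n))
    (hg : ∀ T (hT : T ∈ P.parts), g T hT ∈ cycsOn T) :
    Equiv.Perm.sign (glueFun P g hg) = (-1 : ℤˣ) ^ (S.card - P.parts.card) := by
  rw [glueFun_eq_noncommProd P g hg, sign_noncommProd]
  have h1 : ∀ T ∈ P.parts.attach,
      Equiv.Perm.sign (g T.1 T.2) = (-1 : ℤˣ) ^ (T.1.card - 1) := fun T _ =>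
    sign_of_mem_cycsOn (hg T.1 T.2) (P.nonempty_of_mem_parts T.2)
  rw [Finset.prod_congr rfl h1, Finset.prod_pow_eq_pow_sum]
  congr 1
  rw [Finset.sum_attach P.parts (fun T => T.card - 1)]
  have h2 : ∑ T ∈ P.parts, (T.card - 1) + P.parts.card = ∑ T ∈ P.parts, T.card := by
    rw [Finset.card_eq_sum_ones P.parts, ← Finset.sum_add_distrib]
    apply Finset.sum_congr rfl
    intro T hT
    have := Finset.card_pos.2 (P.nonempty_of_mem_parts hT)
    omega
  have h3 : ∑ T ∈ P.parts, T.card = S.card := P.sum_card_parts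
  omega

lemma parts_cyclePart (σ : Perm (Fin n)) :
    (cyclePart σ S).parts = S.image (cls σ S) := rfl

lemma restr_mem_cycsOn' {σ : Perm (Fin n)} (hσ : ∀ i ∉ S, σ i = i)
    {T : Finset (Fin n)} (hT : T ∈ (cyclePart σ S).parts) : restr σ T ∈ cycsOn T := by
  rw [parts_cyclePart] at hT
  obtain ⟨i, hi, rfl⟩ := Finset.mem_image.1 hT
  exact restr_mem_cycsOn hσ hi

lemma glue_restr {σ : Perm (Fin n)} (hσ : ∀ i ∉ S, σ i = i) :
    glueFun (cyclePart σ S) (fun T _ => restr σ T)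
      (fun T hT => restr_mem_cycsOn' hσ hT) = σ := by
  apply Equiv.ext
  intro x
  by_cases hx : x ∈ S
  · have hT := (cyclePart σ S).part_mem.2 hx
    rw [glueFun_apply_of_mem _ _ _ hx]
    have hT' := hT
    rw [parts_cyclePart] at hT'
    obtain ⟨i, hi, hcls⟩ := Finset.mem_image.1 hT'
    have hinv : ∀ y, y ∈ (cyclePart σ S).part x ↔ σ y ∈ (cyclePart σ S).part x := by
      rw [← hcls]; exact cls_invariant hσ i
    exact restr_apply_of_mem hinv ((cyclePart σ S).mem_part hx)
  · rw [glueFun_apply_of_not_mem _ _ _ hx, hσ x hx]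

lemma cls_glue (P : Finpartition S) (g : ∀ T ∈ P.parts, Perm (Fin n))
    (hg : ∀ T (hT : T ∈ P.parts), g T hT ∈ cycsOn T) {i : Fin n} (hi : i ∈ S) :
    cls (glueFun P g hg) S i = P.part i := by
  have hT : P.part i ∈ P.parts := P.part_mem.2 hi
  set τ := g (P.part i) hT with hτ
  have hag : ∀ x ∈ P.part i, glueFun P g hg x = τ x := fun x hx =>
    glueFun_apply_of_mem_part P g hg hT hx
  have hmem : ∀ x ∈ P.part i, glueFun P g hg x ∈ P.part i := fun x hx => by
    rw [hag x hx]; exact (cycsOn_apply_mem (hg _ hT) x).1 hx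
  ext j
  rw [mem_cls]
  constructor
  · rintro ⟨hjS, hc⟩
    exact mem_of_sameCycle hmem (P.mem_part hi) hc
  · intro hj
    refine ⟨P.le hT hj, ?_⟩
    have hcyc := (mem_cycsOn.1 (hg _ hT)).1
    obtain ⟨k, -, hk⟩ := hcyc.exists_pow_eq (P.mem_part hi) hj
    exact ⟨(k : ℤ), by
      rw [zpow_natCast, (pow_agree hmem hag k i (P.mem_part hi)).1]
      exact hk⟩

lemma cyclePart_glue (P : Finpartition S) (g : ∀ T ∈ P.parts, Perm (Fin n))
    (hg : ∀ T (hT : T ∈ P.parts), g T hT ∈ cycsOn T) :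
    cyclePart (glueFun P g hg) S = P := by
  apply Finpartition.ext
  rw [parts_cyclePart]
  ext T
  rw [Finset.mem_image]
  constructor
  · rintro ⟨i, hi, rfl⟩
    rw [cls_glue P g hg hi]
    exact P.part_mem.2 hi
  · intro hT
    obtain ⟨i, hi⟩ := P.nonempty_of_mem_parts hT
    have hiS : i ∈ S := P.le hT hi
    exact ⟨i, hiS, by rw [cls_glue P g hg hiS, P.part_eq_of_mem hT hi]⟩

lemma restr_glue (P : Finpartition S) (g : ∀ T ∈ P.parts, Perm (Fin n))
    (hg : ∀ T (hT : T ∈ P.parts), g T hT ∈ cycsOn T)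
    {T : Finset (Fin n)} (hT : T ∈ P.parts) :
    restr (glueFun P g hg) T = g T hT := by
  have hinv : ∀ x, x ∈ T ↔ glueFun P g hg x ∈ T := by
    intro x
    constructor
    · intro hx
      rw [glueFun_apply_of_mem_part P g hg hT hx]
      exact (cycsOn_apply_mem (hg T hT) x).1 hx
    · intro hx
      by_contra hxT
      by_cases hxS : x ∈ S
      · have h1 : glueFun P g hg x ∈ P.part x := by
          rw [glueFun_apply_of_mem P g hg hxS]
          exact (cycsOn_apply_mem (hg _ (P.part_mem.2 hxS)) x).1 (P.mem_part hxS)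
        have h2 : T = P.part x := P.eq_of_mem_parts hT (P.part_mem.2 hxS) hx h1
        exact hxT (h2 ▸ P.mem_part hxS)
      · rw [glueFun_apply_of_not_mem P g hg hxS] at hx
        exact hxT hx
  ext x
  by_cases hx : x ∈ T
  · rw [restr_apply_of_mem hinv hx, glueFun_apply_of_mem_part P g hg hT hx]
  · rw [restr_apply_of_not_mem hinv hx, (mem_cycsOn.1 (hg T hT)).2 x hx]

lemma prod_parts {β : Type*} [CommMonoid β] (P : Finpartition S) (f : Fin n → β) :
    ∏ T ∈ P.parts, ∏ i ∈ T, f i = ∏ i ∈ S, f i := by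
  conv_rhs => rw [← P.sup_parts, Finset.sup_eq_biUnion]
  rw [Finset.prod_biUnion P.supIndep.pairwiseDisjoint]
  rfl

lemma pminor_eq (A : Matrix (Fin n) (Fin n) ℂ) (S : Finset (Fin n)) :
    pminor A S
      = ∑ σ ∈ permsOn S, ((Equiv.Perm.sign σ : ℤ) : ℂ) * ∏ i ∈ S, A i (σ i) := by
  rw [pminor, ← Matrix.det_transpose, Matrix.det_apply']
  refine Finset.sum_bij' (i := fun (τ : Perm S) _ => Equiv.Perm.ofSubtype τ)
    (j := fun σ hσ => σ.subtypePerm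
      (fun x => (apply_mem_iff_of_fix (mem_permsOn.1 hσ) x).symm))
    (fun τ _ => mem_permsOn.2 fun i hi => Equiv.Perm.ofSubtype_apply_of_not_mem τ hi)
    (fun _ _ => Finset.mem_univ _)
    (fun τ _ => Equiv.Perm.subtypePerm_ofSubtype τ)
    (fun σ hσ => Equiv.Perm.ofSubtype_subtypePerm _ fun x hne => by
      by_contra hxS
      exact hne (mem_permsOn.1 hσ x hxS))
    ?_
  intro τ _
  congr 1
  · rw [Equiv.Perm.sign_ofSubtype]
  · rw [Finset.univ_eq_attach, ← Finset.prod_attach S (fun i => A i (Equiv.Perm.ofSubtype τ i))]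
    apply Finset.prod_congr rfl
    intro x _
    rw [Matrix.transpose_apply, Matrix.submatrix_apply, Equiv.Perm.ofSubtype_apply_coe]

end Main

end Stmt8Aux

/-- Principal minors in terms of cycle-sums:
`D_S(A) = Σ_{set-partitions S₁⊔⋯⊔S_k of S} (-1)^(|S|-k) C_{S₁}(A)⋯C_{S_k}(A)`. -/
theorem stmt8 (n : ℕ) (A : Matrix (Fin n) (Fin n) ℂ) (S : Finset (Fin n)) :
    pminor A S =
      ∑ P : Finpartition S,
        (-1 : ℂ) ^ (S.card - P.parts.card) * ∏ T ∈ P.parts, cycleSum A T := by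
  classical
  rw [Stmt8Aux.pminor_eq]
  simp_rw [Stmt8Aux.cycleSum_eq, Finset.prod_sum, Finset.mul_sum]
  rw [Finset.sum_sigma']
  refine Eq.symm (Finset.sum_bij
    (fun (x : Σ P : Finpartition S, ∀ T ∈ P.parts, Equiv.Perm (Fin n)) hx =>
      Stmt8Aux.glueFun x.1 x.2
        (fun T hT => Finset.mem_pi.1 (Finset.mem_sigma.1 hx).2 T hT))
    (fun x hx => Stmt8Aux.glueFun_mem_permsOn _ _ _)
    ?inj ?surj ?eq)
  case inj =>
    rintro ⟨P₁, p₁⟩ h₁ ⟨P₂, p₂⟩ h₂ heq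
    have hg₁ : ∀ T (hT : T ∈ P₁.parts), p₁ T hT ∈ Stmt8Aux.cycsOn T :=
      fun T hT => Finset.mem_pi.1 (Finset.mem_sigma.1 h₁).2 T hT
    have hg₂ : ∀ T (hT : T ∈ P₂.parts), p₂ T hT ∈ Stmt8Aux.cycsOn T :=
      fun T hT => Finset.mem_pi.1 (Finset.mem_sigma.1 h₂).2 T hT
    have hP : P₁ = P₂ := by
      rw [← Stmt8Aux.cyclePart_glue P₁ p₁ hg₁, ← Stmt8Aux.cyclePart_glue P₂ p₂ hg₂]
      simp only at heq
      rw [heq]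
    subst hP
    have hp : p₁ = p₂ := by
      funext T hT
      simp only at heq
      rw [← Stmt8Aux.restr_glue P₁ p₁ hg₁ hT, ← Stmt8Aux.restr_glue P₁ p₂ hg₂ hT, heq]
    rw [hp]
  case surj =>
    intro σ hσ
    have hσ' := Stmt8Aux.mem_permsOn.1 hσ
    refine ⟨⟨Stmt8Aux.cyclePart σ S, fun T _ => Stmt8Aux.restr σ T⟩, ?_, ?_⟩
    · exact Finset.mem_sigma.2 ⟨Finset.mem_univ _, Finset.mem_pi.2
        (fun T hT => Stmt8Aux.restr_mem_cycsOn' hσ' hT)⟩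
    · exact Stmt8Aux.glue_restr hσ'
  case eq =>
    rintro ⟨P, p⟩ hx
    have hg : ∀ T (hT : T ∈ P.parts), p T hT ∈ Stmt8Aux.cycsOn T :=
      fun T hT => Finset.mem_pi.1 (Finset.mem_sigma.1 hx).2 T hT
    simp only
    congr 1
    · rw [Stmt8Aux.sign_glueFun P p hg]
      simp [Units.val_pow_eq_pow_val]
    · rw [← Stmt8Aux.prod_parts P (fun i => A i (Stmt8Aux.glueFun P p hg i)),
        ← Finset.prod_attach P.parts
          (fun U => ∏ i ∈ U, A i (Stmt8Aux.glueFun P p hg i))]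
      apply Finset.prod_congr rfl
      intro T _
      apply Finset.prod_congr rfl
      intro i hi
      rw [Stmt8Aux.glueFun_apply_of_mem_part P p hg T.2 hi]
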